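/- Let E be a topological graph with no singular vertices. Then for every n ≥ 1 the map r^n : E^n → E^0, μ ↦ r(μ_1), is proper (preimages of compact sets are compact), and hence is a closed map. -/

import Mathlib

/-- A topological graph: vertex space `V`, edge space `E`, continuous range map `r`
and locally homeomorphic source map `s`. -/
structure TopGraph (V E : Type) [TopologicalSpace V] [TopologicalSpace E] where
  r : E → V
  s : E → V
  r_cont : Continuous r
  s_locHomeo : IsLocalHomeomorph s

namespace TopGraph

variable {V E : Type} [TopologicalSpace V] [TopologicalSpace E] (G : TopGraph V E)

/-- The predicate that `μ : Fin n → E` is a (finite) path. -/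
def IsPathFn {n : ℕ} (μ : Fin n → E) : Prop :=
  ∀ (i : ℕ) (h : i + 1 < n), G.s (μ ⟨i, Nat.lt_of_succ_lt h⟩) = G.r (μ ⟨i + 1, h⟩)

/-- The space `E^n` of paths of length `n`, with the subspace topology of the product. -/
def Path (n : ℕ) : Type := {μ : Fin n → E // G.IsPathFn μ}

instance (n : ℕ) : TopologicalSpace (G.Path n) :=
  inferInstanceAs (TopologicalSpace {μ : Fin n → E // G.IsPathFn μ})

/-- `r^n(μ) = r(μ₁)`. -/
def pathRange {n : ℕ} (hn : 0 < n) (μ : G.Path n) : V := G.r (μ.1 ⟨0, hn⟩)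

/-- `s^n(μ) = s(μₙ)`. -/
def pathSource {n : ℕ} (hn : 0 < n) (μ : G.Path n) : V :=
  G.s (μ.1 ⟨n - 1, Nat.sub_lt hn Nat.one_pos⟩)

/-- A cycle is a path whose range equals its source; its base point is its range. -/
def IsCycle {n : ℕ} (hn : 0 < n) (μ : G.Path n) : Prop :=
  G.pathRange hn μ = G.pathSource hn μ

/-- A path `μ ∈ E^n` has an entrance if some edge `e ≠ μᵢ` has `r(e) = r(μᵢ)`. -/
def HasEntrance {n : ℕ} (μ : G.Path n) : Prop :=
  ∃ (i : Fin n) (e : E), G.r e = G.r (μ.1 i) ∧ e ≠ μ.1 i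

theorem block_lt {n k : ℕ} (j : Fin k) (i : Fin n) : (j : ℕ) * n + (i : ℕ) < k * n := by
  have hi := i.2
  have hj := j.2
  calc (j : ℕ) * n + (i : ℕ) < ((j : ℕ) + 1) * n := by rw [Nat.add_mul, Nat.one_mul]; omega
    _ ≤ k * n := Nat.mul_le_mul (Nat.succ_le_of_lt hj) le_rfl

/-- The `j`-th block of length `n` of a path of length `k * n`. -/
def block {n k : ℕ} (α : G.Path (k * n)) (j : Fin k) : G.Path n :=
  ⟨fun i => α.1 ⟨(j : ℕ) * n + (i : ℕ), block_lt j i⟩,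
    fun i h => α.2 ((j : ℕ) * n + i) (block_lt j ⟨i + 1, h⟩)⟩

/-- `α ∈ kN` : every block of `α` lies in `N`. -/
def BlocksIn {n k : ℕ} (N : Set (G.Path n)) (α : G.Path (k * n)) : Prop :=
  ∀ j : Fin k, G.block α j ∈ N

/-- The set `B^n` of cycles of length `n` admitting `k ≥ 1` and an open neighbourhood `N`
satisfying conditions (1) and (2) of Notation 3.3. -/
def B (n : ℕ) (hn : 0 < n) : Set (G.Path n) :=
  {μ | G.IsCycle hn μ ∧
    ∃ (k : ℕ) (hk : 0 < k) (N : Set (G.Path n)), IsOpen N ∧ μ ∈ N ∧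
      (∀ α β : G.Path (k * n), G.BlocksIn N α → G.BlocksIn N β → α ≠ β →
        ¬ ∃ γ ∈ N, G.pathRange hn γ = G.pathSource (Nat.mul_pos hk hn) α ∧
          G.pathSource hn γ = G.pathSource (Nat.mul_pos hk hn) β) ∧
      (∀ α : G.Path (k * n), G.BlocksIn N α →
        ¬ ∃ γ ∈ N, G.IsCycle hn γ ∧ G.HasEntrance γ ∧
          G.pathRange hn γ = G.pathSource (Nat.mul_pos hk hn) α)}

/-- The infinite path space `E^∞`, with the subspace topology of the product. -/
def InfPath : Type := {x : ℕ → E // ∀ i : ℕ, G.s (x i) = G.r (x (i + 1))}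

instance : TopologicalSpace G.InfPath :=
  inferInstanceAs (TopologicalSpace {x : ℕ → E // ∀ i : ℕ, G.s (x i) = G.r (x (i + 1))})

/-- The one-sided shift on `E^∞`. -/
def shift (x : G.InfPath) : G.InfPath := ⟨fun i => x.1 (i + 1), fun i => x.2 (i + 1)⟩

/-- The segment `x_{a+1} ⋯ x_{a+len}` (0-indexed: edges `a, …, a+len-1`) of an infinite path. -/
def segment (x : G.InfPath) (a len : ℕ) : G.Path len :=
  ⟨fun i => x.1 (a + (i : ℕ)), fun i _ => x.2 (a + i)⟩

/-- The boundary path groupoid `Γ(E^∞, σ)` as a set. -/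
def Gamma : Type :=
  {g : G.InfPath × ℤ × G.InfPath //
    ∃ k l : ℕ, g.2.1 = (k : ℤ) - (l : ℤ) ∧ G.shift^[k] g.1 = G.shift^[l] g.2.2}

/-- Basic sets `U(U, W, k, l)` for the topology of `Γ(E^∞, σ)`. -/
def basicSet (U W : Set G.InfPath) (k l : ℕ) : Set G.Gamma :=
  {g | g.1.1 ∈ U ∧ g.1.2.2 ∈ W ∧ g.1.2.1 = (k : ℤ) - (l : ℤ) ∧
    G.shift^[k] g.1.1 = G.shift^[l] g.1.2.2}

/-- The topology on `Γ(E^∞, σ)` generated by the sets `U(U, W, k, l)` with `U, W` open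
and `σ^k`, `σ^l` injective on `U` resp. `W`. -/
instance : TopologicalSpace G.Gamma :=
  TopologicalSpace.generateFrom
    {S | ∃ (U W : Set G.InfPath) (k l : ℕ), IsOpen U ∧ IsOpen W ∧
      Set.InjOn (G.shift^[k]) U ∧ Set.InjOn (G.shift^[l]) W ∧ S = G.basicSet U W k l}

/-- The isotropy group bundle `Iso(Γ(E^∞, σ))`. -/
def isoSet : Set G.Gamma := {g | g.1.1 = g.1.2.2}

/-- The interior of the isotropy group bundle. -/
def isoInterior : Set G.Gamma := interior G.isoSet

/-- The set `E^0_fin` of finite receivers. -/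
def finRecv : Set V := {v | ∃ N : Set V, IsOpen N ∧ v ∈ N ∧ IsCompact (G.r ⁻¹' closure N)}

/-- The set `E^0_sce` of sources. -/
def sce : Set V := (closure (Set.range G.r))ᶜ

/-- The set `E^0_rg` of regular vertices. -/
def rg : Set V := G.finRecv \ closure G.sce

/-- The set `E^0_sg` of singular vertices. -/
def sg : Set V := G.rgᶜ

/-- The set `V_n` of vertices having an open neighbourhood consisting of base points of
cycles without entrances in `E^n`. -/
def Vset (n : ℕ) (hn : 0 < n) : Set V :=
  {v | ∃ W : Set V, IsOpen W ∧ v ∈ W ∧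
    ∀ w ∈ W, ∃ γ : G.Path n, G.IsCycle hn γ ∧ ¬ G.HasEntrance γ ∧ G.pathRange hn γ = w}

/-- `E` is topologically free if the set of base points of cycles without entrances has
empty interior. -/
def TopologicallyFree : Prop :=
  interior {v : V | ∃ (n : ℕ) (hn : 0 < n) (γ : G.Path n),
    G.IsCycle hn γ ∧ ¬ G.HasEntrance γ ∧ G.pathRange hn γ = v} = ∅

/-- The groupoid `Γ(E^∞, σ)` is essentially free if the set of units with trivial
isotropy is dense. -/
def EssentiallyFree : Prop :=
  Dense {x : G.InfPath | ∀ g : G.Gamma, g.1.1 = x → g.1.2.2 = x → g.1.2.1 = 0}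

end TopGraph

/-- If every vertex is a finite receiver, then `r` is proper. -/
theorem TopGraph.r_proper {V E : Type} [TopologicalSpace V] [TopologicalSpace E] [T2Space V]
    (G : TopGraph V E) (hfin : ∀ v : V, v ∈ G.finRecv)
    {C : Set V} (hC : IsCompact C) : IsCompact (G.r ⁻¹' C) := by
  choose N hNopen hNmem hNcpt using hfin
  obtain ⟨t, ht⟩ := hC.elim_finite_subcover (fun v : V => N v) (fun v => hNopen v)
    (fun v _ => Set.mem_iUnion.2 ⟨v, hNmem v⟩)
  refine IsCompact.of_isClosed_subset
    (t.finite_toSet.isCompact_biUnion (fun v _ => hNcpt v))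
    (hC.isClosed.preimage G.r_cont) ?_
  intro e he
  obtain ⟨v, hv, hev⟩ := Set.mem_iUnion₂.1 (ht he)
  exact Set.mem_iUnion₂.2 ⟨v, hv, subset_closure hev⟩

/-- If `E` has no singular vertices, then `r^n : E^n → E^0` is proper, hence a closed map. -/
theorem stmt7 {V E : Type} [TopologicalSpace V] [TopologicalSpace E]
    [T2Space V] [T2Space E] [LocallyCompactSpace V] [LocallyCompactSpace E]
    [SecondCountableTopology V] [SecondCountableTopology E]
    (G : TopGraph V E)
    (hsg : G.sg = ∅) (n : ℕ) (hn : 0 < n) :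
    (∀ K : Set V, IsCompact K → IsCompact (G.pathRange hn ⁻¹' K)) ∧
    IsClosedMap (G.pathRange hn) := by
  have hfin : ∀ v : V, v ∈ G.finRecv := by
    intro v
    have hv : v ∈ G.rg := by
      by_contra h
      exact (hsg ▸ (h : v ∈ G.sg) : v ∈ (∅ : Set V))
    exact hv.1
  have hcont : Continuous (G.pathRange hn) :=
    G.r_cont.comp ((continuous_apply _).comp continuous_subtype_val)
  have h1 : ∀ K : Set V, IsCompact K → IsCompact (G.pathRange hn ⁻¹' K) := by
    intro K hK
    -- compact sets controlling each coordinate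
    set f : ℕ → Set E := fun i => Nat.rec (G.r ⁻¹' K)
      (fun _ prev => G.r ⁻¹' (G.s '' prev)) i with hf
    have hfc : ∀ i, IsCompact (f i) := by
      intro i
      induction i with
      | zero => exact G.r_proper hfin hK
      | succ i ih =>
        exact G.r_proper hfin (ih.image G.s_locHomeo.continuous)
    set T : Set (Fin n → E) :=
      {μ | G.IsPathFn μ ∧ G.r (μ ⟨0, hn⟩) ∈ K} with hT
    have hTsub : T ⊆ Set.univ.pi (fun i : Fin n => f (i : ℕ)) := by
      rintro μ ⟨hμ, h0⟩ i _
      obtain ⟨i, hi⟩ := i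
      induction i with
      | zero => exact h0
      | succ i ih =>
        have hi' : i < n := Nat.lt_of_succ_lt hi
        have := hμ i hi
        exact ⟨μ ⟨i, hi'⟩, ih hi' trivial, this⟩
    have hTclosed : IsClosed T := by
      have h1 : IsClosed {μ : Fin n → E | G.IsPathFn μ} := by
        have : {μ : Fin n → E | G.IsPathFn μ} =
            ⋂ (i : ℕ), ⋂ (h : i + 1 < n),
              {μ : Fin n → E | G.s (μ ⟨i, Nat.lt_of_succ_lt h⟩) = G.r (μ ⟨i + 1, h⟩)} := by
          ext μ
          simp only [Set.mem_iInter, Set.mem_setOf_eq]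
          rfl
        rw [this]
        exact isClosed_iInter fun i => isClosed_iInter fun h =>
          isClosed_eq (G.s_locHomeo.continuous.comp (continuous_apply _))
            (G.r_cont.comp (continuous_apply _))
      have h2 : IsClosed {μ : Fin n → E | G.r (μ ⟨0, hn⟩) ∈ K} :=
        hK.isClosed.preimage (G.r_cont.comp (continuous_apply _))
      exact h1.inter h2
    have hTcpt : IsCompact T :=
      IsCompact.of_isClosed_subset (isCompact_univ_pi fun i => hfc i) hTclosed hTsub
    have himg : Subtype.val '' (G.pathRange hn ⁻¹' K) = T := by
      ext μ
      constructor
      · rintro ⟨⟨ν, hν⟩, hmem, rfl⟩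
        exact ⟨hν, hmem⟩
      · rintro ⟨hμ, h0⟩
        exact ⟨⟨μ, hμ⟩, h0, rfl⟩
    have := Topology.IsEmbedding.subtypeVal (p := fun μ : Fin n → E => G.IsPathFn μ)
    exact this.isCompact_iff.mpr (himg.symm ▸ hTcpt)
  exact ⟨h1, (isProperMap_iff_isCompact_preimage.mpr ⟨hcont, fun {K} hK => h1 K hK⟩).isClosedMap⟩
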